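/- Let y ∈ ℝ^{N}, with N = binom(n+d,d), be a tms of degree d = 2d_0 + 1, admitting an r-atomic representing measure μ where r = rank M_{d_0}(y). Let z be the degree-(d+1) tms induced by μ. Then rank M_{d_0+1}(z) = rank M_{d_0}(y), i.e., z is a flat extension of y. -/

import Mathlib

open MvPolynomial

/-- The finite set of multi-indices of total degree at most `k`. -/
noncomputable def degLE (n k : ℕ) : Finset (Fin n →₀ ℕ) :=
  (Finset.Iic (Finsupp.equivFunOnFinite.symm fun _ : Fin n => k)).filter
    fun α => (α.sum fun _ m => m) ≤ k

/-- The `k`-th order moment matrix of a (truncated) moment sequence `w`, indexed by the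
multi-indices of degree at most `k`, with `(α,β)` entry `w_{α+β}`. -/
noncomputable def momMat (n k : ℕ) (w : (Fin n →₀ ℕ) → ℝ) :
    Matrix (degLE n k) (degLE n k) ℝ :=
  fun α β => w ((α : Fin n →₀ ℕ) + (β : Fin n →₀ ℕ))

lemma degLE_deg {n k : ℕ} {α : Fin n →₀ ℕ} (h : α ∈ degLE n k) :
    (α.sum fun _ m => m) ≤ k := (Finset.mem_filter.mp h).2

lemma degLE_mono {n k : ℕ} {α : Fin n →₀ ℕ} (h : α ∈ degLE n k) : α ∈ degLE n (k + 1) := by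
  simp only [degLE, Finset.mem_filter, Finset.mem_Iic] at h ⊢
  refine ⟨?_, h.2.trans (Nat.le_succ _)⟩
  intro i
  have := h.1 i
  simp only [Finsupp.coe_equivFunOnFinite_symm] at this ⊢
  omega

lemma sum_deg_add {n : ℕ} (α β : Fin n →₀ ℕ) :
    ((α + β).sum fun _ m => m) = (α.sum fun _ m => m) + (β.sum fun _ m => m) :=
  Finsupp.sum_add_index' (fun _ => rfl) (fun _ _ _ => rfl)

lemma prod_pow_add {n r : ℕ} (u : Fin r → Fin n → ℝ) (j : Fin r) (α β : Fin n →₀ ℕ) :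
    (∏ i, u j i ^ (α + β) i) = (∏ i, u j i ^ α i) * ∏ i, u j i ^ β i := by
  rw [← Finset.prod_mul_distrib]
  exact Finset.prod_congr rfl fun i _ => by rw [Finsupp.add_apply, pow_add]

theorem flat_extension_of_rank_atomic {n d0 r : ℕ}
    (u : Fin r → (Fin n → ℝ)) (hu : Function.Injective u)
    (lam : Fin r → ℝ) (hlam : ∀ j, 0 < lam j)
    (y z : (Fin n →₀ ℕ) → ℝ)
    (hy : ∀ α : Fin n →₀ ℕ, (α.sum fun _ m => m) ≤ 2 * d0 + 1 →
      y α = ∑ j, lam j * ∏ i, u j i ^ α i)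
    (hz : ∀ α : Fin n →₀ ℕ, (α.sum fun _ m => m) ≤ 2 * (d0 + 1) →
      z α = ∑ j, lam j * ∏ i, u j i ^ α i)
    (hr : (momMat n d0 y).rank = r) :
    (momMat n (d0 + 1) z).rank = (momMat n d0 y).rank := by
  classical
  set M : Matrix (degLE n (d0+1)) (degLE n (d0+1)) ℝ := momMat n (d0+1) z with hM
  -- entrywise formula for M
  have hMent : ∀ α β : degLE n (d0+1),
      M α β = ∑ j, lam j * ((∏ i, u j i ^ (α : Fin n →₀ ℕ) i) *
        ∏ i, u j i ^ (β : Fin n →₀ ℕ) i) := by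
    intro α β
    have h1 : (((α : Fin n →₀ ℕ) + (β : Fin n →₀ ℕ)).sum fun _ m => m) ≤ 2 * (d0 + 1) := by
      rw [sum_deg_add]
      have h2 := degLE_deg α.2
      have h3 := degLE_deg β.2
      omega
    show z ((α : Fin n →₀ ℕ) + (β : Fin n →₀ ℕ)) = _
    rw [hz _ h1]
    exact Finset.sum_congr rfl fun j _ => by rw [prod_pow_add]
  -- upper bound: rank M ≤ r
  have hub : M.rank ≤ r := by
    have hfact : M =
        (Matrix.of fun (α : degLE n (d0+1)) (j : Fin r) =>
          lam j * ∏ i, u j i ^ (α : Fin n →₀ ℕ) i) *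
        (Matrix.of fun (j : Fin r) (β : degLE n (d0+1)) =>
          ∏ i, u j i ^ (β : Fin n →₀ ℕ) i) := by
      ext α β
      rw [Matrix.mul_apply, hMent α β]
      exact Finset.sum_congr rfl fun j _ => by simp [mul_assoc]
    calc M.rank ≤ (Matrix.of fun (α : degLE n (d0+1)) (j : Fin r) =>
          lam j * ∏ i, u j i ^ (α : Fin n →₀ ℕ) i).rank := by
            rw [hfact]; exact Matrix.rank_mul_le_left _ _
      _ ≤ Fintype.card (Fin r) := Matrix.rank_le_card_width _
      _ = r := Fintype.card_fin r
  -- lower bound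
  let e : degLE n d0 → degLE n (d0+1) := fun α => ⟨α, degLE_mono α.2⟩
  let P : Matrix (degLE n d0) (degLE n (d0+1)) ℝ := fun α β => if e α = β then 1 else 0
  have hfact2 : momMat n d0 y = P * (M * P.transpose) := by
    ext α β
    have h4 : (P * (M * P.transpose)) α β = M (e α) (e β) := by
      rw [Matrix.mul_apply]
      rw [Finset.sum_eq_single (e α)]
      · rw [Matrix.mul_apply, Finset.sum_eq_single (e β)]
        · simp [P, Matrix.transpose]
        · intro b _ hb; simp [P, Matrix.transpose, Ne.symm hb]
        · intro h; exact absurd (Finset.mem_univ _) h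
      · intro b _ hb; simp [P, Ne.symm hb]
      · intro h; exact absurd (Finset.mem_univ _) h
    rw [h4, hMent]
    have hdeg : (((α : Fin n →₀ ℕ) + (β : Fin n →₀ ℕ)).sum fun _ m => m) ≤ 2 * d0 + 1 := by
      rw [sum_deg_add]
      have h2 := degLE_deg α.2
      have h3 := degLE_deg β.2
      omega
    show y ((α : Fin n →₀ ℕ) + (β : Fin n →₀ ℕ)) = _
    rw [hy _ hdeg]
    exact Finset.sum_congr rfl fun j _ => by rw [prod_pow_add]
  have hlb : (momMat n d0 y).rank ≤ M.rank := by
    rw [hfact2]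
    exact (Matrix.rank_mul_le_right _ _).trans (Matrix.rank_mul_le_left _ _)
  omega
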